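/- arXiv:1610.05445 — 2 statements merged into one kernel-verified Lean document; each statement's English description precedes it below -/
import Mathlib

section
/- For every k, Ramsey's theorem for pairs and k colors implies the Adjacent Hindman Theorem for k colors: for every coloring c : ℕ → Fin k, there exists a strictly increasing apart sequence h : ℕ → ℕ and a color d such that every sum of adjacent elements h i + h(i+1) + ... + h j (i ≤ j) has color d. -/
/-- λ(n): the 2-adic valuation of n (least exponent in binary expansion). -/
def lam (n : ℕ) : ℕ := padicValNat 2 n

/-- μ(n): ⌊log₂ n⌋ (greatest exponent in binary expansion). -/
def mu (n : ℕ) : ℕ := Nat.log 2 n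

/-- Apartness condition for a sequence. -/
def Apart (h : ℕ → ℕ) : Prop := ∀ i j, i < j → mu (h i) < lam (h j)

/-- Sum of adjacent elements h i + h (i+1) + ... + h j. -/
def adjSum (h : ℕ → ℕ) (i j : ℕ) : ℕ := ∑ t ∈ Finset.Icc i j, h t

lemma pow_sub_pos {a b : ℕ} (hab : a < b) : 0 < 2^b - 2^a :=
  Nat.sub_pos_of_lt (Nat.pow_lt_pow_right one_lt_two hab)

lemma lam_pow_sub {a b : ℕ} (hab : a < b) : lam (2^b - 2^a) = a := by
  haveI : Fact (Nat.Prime 2) := ⟨Nat.prime_two⟩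
  have hfac : 2^b - 2^a = 2^a * (2^(b-a) - 1) := by
    rw [Nat.mul_sub, mul_one, ← pow_add, Nat.add_sub_cancel' hab.le]
  have hsplit : 2^(b-a) = 2 * 2^(b-a-1) := by
    rw [← pow_succ']; congr 1; omega
  have hpos1 : 0 < 2^(b-a-1) := Nat.pow_pos (by norm_num)
  have hodd : ¬ (2 ∣ (2^(b-a) - 1)) := by omega
  have hne : 2^(b-a) - 1 ≠ 0 := by omega
  rw [lam, hfac, padicValNat.mul (by positivity) hne, padicValNat.prime_pow,
    padicValNat.eq_zero_of_not_dvd hodd, Nat.add_zero]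

lemma mu_pow_sub {a b : ℕ} (hab : a < b) : mu (2^b - 2^a) = b - 1 := by
  rw [mu]
  apply Nat.log_eq_of_pow_le_of_lt_pow
  · have : 2^a ≤ 2^(b-1) := Nat.pow_le_pow_right (by norm_num) (by omega)
    have h2 : 2^(b-1) + 2^(b-1) = 2^b := by
      rw [← two_mul, ← pow_succ']
      congr 1; omega
    omega
  · have h0 : 0 < 2^a := Nat.pow_pos (by norm_num)
    have h1 : 0 < 2^(b-1) := Nat.pow_pos (by norm_num)
    have hb : 2^(b-1+1) = 2^b := by congr 1; omega
    omega

lemma adjSum_telescope (e : ℕ → ℕ) (he : StrictMono e) (i j : ℕ) (hij : i ≤ j) :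
    adjSum (fun t => 2^(e (t+1)) - 2^(e t)) i j = 2^(e (j+1)) - 2^(e i) := by
  induction j, hij using Nat.le_induction with
  | base => simp [adjSum]
  | succ n hin ih =>
    rw [adjSum] at ih ⊢
    rw [Finset.sum_Icc_succ_top (by omega), ih]
    have h1 : 2^(e i) ≤ 2^(e (n+1)) :=
      Nat.pow_le_pow_right (by norm_num) (he.le_iff_le.mpr (by omega))
    have h2 : 2^(e (n+1)) ≤ 2^(e (n+1+1)) :=
      Nat.pow_le_pow_right (by norm_num) (he (Nat.lt_succ_self (n+1))).le
    omega

theorem rt2k_implies_ahtk (k : ℕ)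
    (ramsey : ∀ f : ℕ → ℕ → Fin k, ∃ J : Set ℕ, J.Infinite ∧
      ∃ d : Fin k, ∀ x ∈ J, ∀ y ∈ J, x < y → f x y = d) :
    ∀ c : ℕ → Fin k, ∃ h : ℕ → ℕ, StrictMono h ∧ (∀ i, 0 < h i) ∧ Apart h ∧
      ∃ d : Fin k, ∀ i j, i ≤ j → c (adjSum h i j) = d := by
  intro c
  obtain ⟨J, hJ, d, hd⟩ := ramsey (fun x y => c (2^y - 2^x))
  haveI := hJ.to_subtype
  set e : ℕ → ℕ := fun n => ((Nat.Subtype.orderIsoOfNat J n : J) : ℕ) with he_def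
  have heJ : ∀ n, e n ∈ J := fun n => (Nat.Subtype.orderIsoOfNat J n).2
  have he : StrictMono e := fun i j hij =>
    Subtype.coe_lt_coe.mpr ((Nat.Subtype.orderIsoOfNat J).strictMono hij)
  refine ⟨fun t => 2^(e (t+1)) - 2^(e t), ?_, fun t => pow_sub_pos (he (Nat.lt_succ_self t)),
    ?_, d, ?_⟩
  · apply strictMono_nat_of_lt_succ
    intro t
    have h1 : 2^(e (t+1)) ≤ 2^(e (t+1+1)) - 2^(e (t+1)) := by
      have hlt : e (t+1) + 1 ≤ e (t+1+1) := he (Nat.lt_succ_self (t+1))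
      have h2 : 2^(e (t+1) + 1) ≤ 2^(e (t+1+1)) := Nat.pow_le_pow_right (by norm_num) hlt
      have h3 : 2^(e (t+1) + 1) = 2 * 2^(e (t+1)) := by rw [pow_succ]; ring
      omega
    have h4 : 0 < 2^(e t) := Nat.pow_pos (by norm_num)
    have h5 : 0 < 2^(e (t+1)) := Nat.pow_pos (by norm_num)
    omega
  · intro i j hij
    simp only
    rw [mu_pow_sub (he (Nat.lt_succ_self i)), lam_pow_sub (he (Nat.lt_succ_self j))]
    have h1 : e (Nat.succ i) ≤ e j := he.le_iff_le.mpr (Nat.succ_le_of_lt hij)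
    have h2 : e i < e (Nat.succ i) := he (Nat.lt_succ_self i)
    omega
  · intro i j hij
    rw [adjSum_telescope e he i j hij]
    exact hd (e i) (heJ i) (e (j+1)) (heJ (j+1)) (he (by omega))
end

section
/- For every k, the Adjacent Hindman Theorem for k colors implies the Increasing Polarized Ramsey Theorem for pairs and k colors: if every g : ℕ → Fin k admits an apart strictly increasing sequence with monochromatic adjacent sums, then every f : ℕ → ℕ → Fin k admits infinite sets H₁, H₂ and a color d with f x₁ x₂ = d for all x₁ ∈ H₁, x₂ ∈ H₂, x₁ < x₂. -/
lemma lam_le_mu (n : ℕ) : lam n ≤ mu n := padicValNat_le_nat_log n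

lemma lam_add {a b : ℕ} (ha : a ≠ 0) (hb : b ≠ 0) (hlt : lam a < lam b) :
    lam (a + b) = lam a := by
  haveI : Fact (Nat.Prime 2) := ⟨Nat.prime_two⟩
  have hab : a + b ≠ 0 := by omega
  apply le_antisymm
  · by_contra hc
    push_neg at hc
    have hc' : lam a + 1 ≤ lam (a + b) := hc
    have h1 : (2 : ℕ) ^ (lam a + 1) ∣ a + b :=
      (padicValNat_dvd_iff_le hab).2 hc'
    have h2 : (2 : ℕ) ^ (lam a + 1) ∣ b :=
      (padicValNat_dvd_iff_le hb).2 hlt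
    have h3 : (2 : ℕ) ^ (lam a + 1) ∣ a := by
      have := Nat.dvd_sub h1 h2
      simpa using this
    exact pow_succ_padicValNat_not_dvd ha h3
  · have h1 : (2 : ℕ) ^ lam a ∣ a := pow_padicValNat_dvd
    have h2 : (2 : ℕ) ^ lam a ∣ b :=
      (padicValNat_dvd_iff_le hb).2 hlt.le
    exact (padicValNat_dvd_iff_le hab).1 (h1.add h2)

lemma mu_add {a b : ℕ} (hb : b ≠ 0) (hab : a < 2 ^ lam b) : mu (a + b) = mu b := by
  have h1 : b < 2 ^ (mu b + 1) := Nat.lt_pow_succ_log_self one_lt_two b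
  have h2 : lam b ≤ mu b := lam_le_mu b
  obtain ⟨c, hc⟩ : (2 : ℕ) ^ lam b ∣ b := pow_padicValNat_dvd
  have hpow : (2 : ℕ) ^ (mu b + 1) = 2 ^ lam b * 2 ^ (mu b + 1 - lam b) := by
    rw [← pow_add]; congr 1; omega
  have hclt : c < 2 ^ (mu b + 1 - lam b) := by
    have h3 : 2 ^ lam b * c < 2 ^ lam b * 2 ^ (mu b + 1 - lam b) := by
      rw [← hc, ← hpow]; exact h1
    exact Nat.lt_of_mul_lt_mul_left h3
  have hkey : b + 2 ^ lam b ≤ 2 ^ (mu b + 1) := by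
    calc b + 2 ^ lam b = 2 ^ lam b * (c + 1) := by rw [mul_add, mul_one, ← hc]
    _ ≤ 2 ^ lam b * 2 ^ (mu b + 1 - lam b) := Nat.mul_le_mul_left _ hclt
    _ = 2 ^ (mu b + 1) := hpow.symm
  apply Nat.log_eq_of_pow_le_of_lt_pow
  · exact le_trans (Nat.pow_log_le_self 2 hb) (Nat.le_add_left b a)
  · omega

lemma adjSum_key (h : ℕ → ℕ) (hpos : ∀ i, 0 < h i) (hap : Apart h) :
    ∀ i j, i ≤ j → 0 < adjSum h i j ∧ lam (adjSum h i j) = lam (h i) ∧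
      mu (adjSum h i j) = mu (h j) := by
  intro i j hij
  induction j, hij using Nat.le_induction with
  | base =>
    refine ⟨?_, ?_, ?_⟩ <;> simp [adjSum, Finset.Icc_self, hpos i]
  | succ j hij ih =>
    obtain ⟨hp, hl, hm⟩ := ih
    have hstep : adjSum h i (j + 1) = adjSum h i j + h (j + 1) := by
      unfold adjSum
      rw [← Finset.sum_Icc_succ_top (by omega)]
    have hlt1 : lam (adjSum h i j) < lam (h (j + 1)) := by
      have := hap i (j + 1) (by omega)
      have := lam_le_mu (h i)
      omega
    have hlt2 : adjSum h i j < 2 ^ lam (h (j + 1)) := by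
      have h1 : adjSum h i j < 2 ^ (mu (adjSum h i j) + 1) :=
        Nat.lt_pow_succ_log_self one_lt_two _
      have h2 : mu (h j) < lam (h (j + 1)) := hap j (j + 1) (by omega)
      calc adjSum h i j < 2 ^ (mu (adjSum h i j) + 1) := h1
        _ ≤ 2 ^ lam (h (j + 1)) := Nat.pow_le_pow_right (by norm_num) (by omega)
    refine ⟨?_, ?_, ?_⟩
    · have := hpos (j + 1); omega
    · rw [hstep, lam_add (by omega) (by have := hpos (j+1); omega) hlt1, hl]
    · rw [hstep, mu_add (by have := hpos (j+1); omega) hlt2]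

theorem ahtk_implies_ipt2k (k : ℕ)
    (aht : ∀ g : ℕ → Fin k, ∃ h : ℕ → ℕ, StrictMono h ∧ (∀ i, 0 < h i) ∧ Apart h ∧
      ∃ d : Fin k, ∀ i j, i ≤ j → g (adjSum h i j) = d) :
    ∀ f : ℕ → ℕ → Fin k, ∃ H₁ H₂ : Set ℕ, H₁.Infinite ∧ H₂.Infinite ∧
      ∃ d : Fin k, ∀ x₁ ∈ H₁, ∀ x₂ ∈ H₂, x₁ < x₂ → f x₁ x₂ = d := by
  intro f
  obtain ⟨h, hmono, hpos, hap, d, hd⟩ := aht (fun n => f (lam n) (mu n))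
  have hlmono : StrictMono (fun i => lam (h i)) := fun a b hab =>
    lt_of_le_of_lt (lam_le_mu (h a)) (hap a b hab)
  have hmmono : StrictMono (fun j => mu (h j)) := fun a b hab =>
    lt_of_lt_of_le (hap a b hab) (lam_le_mu (h b))
  refine ⟨Set.range (fun i => lam (h i)), Set.range (fun j => mu (h j)), ?_, ?_, d, ?_⟩
  · exact Set.infinite_range_of_injective hlmono.injective
  · exact Set.infinite_range_of_injective hmmono.injective
  · rintro x₁ ⟨i, rfl⟩ x₂ ⟨j, rfl⟩ hlt
    simp only at hlt ⊢
    have hij : i ≤ j := by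
      by_contra hc
      push_neg at hc
      have := hap j i hc
      have := lam_le_mu (h i)
      omega
    obtain ⟨_, hl, hm⟩ := adjSum_key h hpos hap i j hij
    have := hd i j hij
    simp only [hl, hm] at this
    exact this
end
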